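/- arXiv:2405.00327 — 2 statements merged into one kernel-verified Lean document; each statement's English description precedes it below -/
import Mathlib

section
/- Let μ ∈ (1,2) and n ≥ 1. Suppose x, x' ∈ [0,1) satisfy x < x' and γ^n(x) = γ^n(x') = b_1⋯b_n. Then f^n(x) < f^n(x') if b_n = 0, and f^n(x) > f^n(x') if b_n = 1. -/
open Set MeasureTheory

/-- The tent map `f(x) = μx` for `x ≤ 1/2` and `μ(1-x)` for `x ≥ 1/2`. -/
noncomputable def tentMap (μ : ℝ) (x : ℝ) : ℝ :=
  if x ≤ 1/2 then μ * x else μ * (1 - x)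

/-- `tentBit μ x k` is the `(k+1)`-st bit `b_{k+1}` of the tent code of `x`. -/
noncomputable def tentBit (μ x : ℝ) : ℕ → Bool
  | 0 => if 1/2 ≤ x then true else false
  | k + 1 =>
    if (tentMap μ)^[k+1] x < 1/2 then tentBit μ x k
    else if 1/2 < (tentMap μ)^[k+1] x then !(tentBit μ x k)
    else true

/-- The tent code `γ^n(x) = b_1 ⋯ b_n`. -/
noncomputable def tentCode (μ : ℝ) (n : ℕ) (x : ℝ) : List Bool :=
  (List.range n).map (tentBit μ x)

/-- The tent language `L_n = {γ^n(x) : x ∈ [0,1)}`. -/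
def tentLang (μ : ℝ) (n : ℕ) : Set (List Bool) :=
  {w | ∃ x ∈ Set.Ico (0:ℝ) 1, tentCode μ n x = w}

/-- The segment-type `T(w) = {f^n(x) : x ∈ [0,1), γ^n(x) = w}`. -/
def segType (μ : ℝ) (n : ℕ) (w : List Bool) : Set ℝ :=
  {y | ∃ x ∈ Set.Ico (0:ℝ) 1, tentCode μ n x = w ∧ (tentMap μ)^[n] x = y}

/-- The set of segment-types `𝒯_n = {T(w) : w ∈ L_n}`. -/
def typeSet (μ : ℝ) (n : ℕ) : Set (Set ℝ) :=
  {S | ∃ w ∈ tentLang μ n, segType μ n w = S}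

/-- `I_i = T(γ^i(1/2))`. -/
noncomputable def Iseg (μ : ℝ) (i : ℕ) : Set ℝ :=
  segType μ i (tentCode μ i (1/2))

/-- `Ī_i = T(c̄_i)` where `c̄_i` is the bitwise complement of `γ^i(1/2)`. -/
noncomputable def Isegbar (μ : ℝ) (i : ℕ) : Set ℝ :=
  segType μ i ((tentCode μ i (1/2)).map (fun b => !b))

/-- The length of the interval `T(w)` (zero if `T(w)` is empty). -/
noncomputable def segLen (μ : ℝ) (n : ℕ) (w : List Bool) : ℝ :=
  (MeasureTheory.volume (segType μ n w)).toReal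


lemma tentMap_of_le (μ a : ℝ) (h : a ≤ 1/2) : tentMap μ a = μ * a := if_pos h

lemma tentMap_of_ge (μ a : ℝ) (h : 1/2 ≤ a) : tentMap μ a = μ * (1 - a) := by
  unfold tentMap
  split
  · have : a = (1:ℝ)/2 := le_antisymm ‹_› h
    rw [this]; ring
  · rfl

lemma tentBit_succ (μ z : ℝ) (k : ℕ) :
    tentBit μ z (k+1) = if (tentMap μ)^[k+1] z < 1/2 then tentBit μ z k
      else if 1/2 < (tentMap μ)^[k+1] z then !(tentBit μ z k) else true := rfl

lemma tentBit_zero (μ z : ℝ) :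
    tentBit μ z 0 = if 1/2 ≤ z then true else false := rfl

/-- equal codes and `x < x'` order the iterates according to the last bit. -/
theorem tent_iterate_order_of_code_eq (μ : ℝ) (hμ1 : 1 < μ) (hμ2 : μ < 2)
    (n : ℕ) (hn : 1 ≤ n) (x x' : ℝ) (hx : x ∈ Set.Ico (0:ℝ) 1) (hx' : x' ∈ Set.Ico (0:ℝ) 1)
    (hlt : x < x') (hcode : tentCode μ n x = tentCode μ n x') :
    (tentBit μ x (n - 1) = false → (tentMap μ)^[n] x < (tentMap μ)^[n] x') ∧
    (tentBit μ x (n - 1) = true → (tentMap μ)^[n] x' < (tentMap μ)^[n] x) := by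
  have hμ0 : (0:ℝ) < μ := by linarith
  have hbit : ∀ i, i < n → tentBit μ x i = tentBit μ x' i := by
    intro i hi
    have h := congrArg (fun l => l.getD i true) hcode
    simpa [tentCode, List.getD_eq_getElem?_getD, List.getElem?_map, List.getElem?_range, hi]
      using h
  have main : ∀ k, k < n →
      ((tentBit μ x k = false → (tentMap μ)^[k+1] x < (tentMap μ)^[k+1] x') ∧
       (tentBit μ x k = true → (tentMap μ)^[k+1] x' < (tentMap μ)^[k+1] x)) := by
    intro k
    induction k with
    | zero =>
      intro h0
      have hb := hbit 0 h0
      rw [tentBit_zero, tentBit_zero] at hb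
      simp only [zero_add, Function.iterate_one]
      constructor
      · intro hf
        rw [tentBit_zero] at hf
        by_cases h1 : (1:ℝ)/2 ≤ x
        · rw [if_pos h1] at hf; exact absurd hf (by simp)
        · have h2 : ¬ ((1:ℝ)/2 ≤ x') := by
            intro h2
            rw [if_neg h1, if_pos h2] at hb
            exact absurd hb (by simp)
          push_neg at h1 h2
          rw [tentMap_of_le μ x h1.le, tentMap_of_le μ x' h2.le]
          nlinarith
      · intro hf
        rw [tentBit_zero] at hf
        by_cases h1 : (1:ℝ)/2 ≤ x
        · have h2 : (1:ℝ)/2 ≤ x' := by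
            by_contra h2
            rw [if_pos h1, if_neg h2] at hb
            exact absurd hb (by simp)
          rw [tentMap_of_ge μ x h1, tentMap_of_ge μ x' h2]
          nlinarith
        · rw [if_neg h1] at hf; exact absurd hf (by simp)
    | succ k ih =>
      intro hk1
      have hk : k < n := by omega
      have IH := ih hk
      have hbk := hbit k hk
      have hbk1 := hbit (k+1) hk1
      set A := (tentMap μ)^[k+1] x with hA
      set B := (tentMap μ)^[k+1] x' with hB
      have hit : (tentMap μ)^[k+1+1] x = tentMap μ A := Function.iterate_succ_apply' _ _ _
      have hit' : (tentMap μ)^[k+1+1] x' = tentMap μ B := Function.iterate_succ_apply' _ _ _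
      rw [hit, hit']
      cases hb : tentBit μ x k with
      | false =>
        have hb' : tentBit μ x' k = false := hbk.symm.trans hb
        have hAB : A < B := IH.1 hb
        have hxbit : tentBit μ x (k+1) = if A < 1/2 then false else true := by
          rw [tentBit_succ, hb, ← hA]
          split_ifs <;> first | rfl | (exfalso; linarith)
        have hxbit' : tentBit μ x' (k+1) = if B < 1/2 then false else true := by
          rw [tentBit_succ, hb', ← hB]
          split_ifs <;> first | rfl | (exfalso; linarith)
        by_cases hv : A < 1/2
        · have hv' : B < 1/2 := by
            by_contra hw
            rw [hxbit, hxbit', if_pos hv, if_neg hw] at hbk1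
            exact absurd hbk1 (by simp)
          have hbv : tentBit μ x (k+1) = false := by rw [hxbit, if_pos hv]
          refine ⟨fun _ => ?_, fun h => by rw [hbv] at h; exact absurd h (by simp)⟩
          rw [tentMap_of_le μ A hv.le, tentMap_of_le μ B hv'.le]
          nlinarith
        · have hv' : ¬ B < 1/2 := by
            intro hw
            rw [hxbit, hxbit', if_neg hv, if_pos hw] at hbk1
            exact absurd hbk1 (by simp)
          have hbv : tentBit μ x (k+1) = true := by rw [hxbit, if_neg hv]
          refine ⟨fun h => by rw [hbv] at h; exact absurd h (by simp), fun _ => ?_⟩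
          rw [tentMap_of_ge μ A (le_of_not_gt hv), tentMap_of_ge μ B (le_of_not_gt hv')]
          nlinarith
      | true =>
        have hb' : tentBit μ x' k = true := hbk.symm.trans hb
        have hAB : B < A := IH.2 hb
        have hxbit : tentBit μ x (k+1) = if 1/2 < A then false else true := by
          rw [tentBit_succ, hb, ← hA]
          split_ifs <;> first | rfl | (exfalso; linarith)
        have hxbit' : tentBit μ x' (k+1) = if 1/2 < B then false else true := by
          rw [tentBit_succ, hb', ← hB]
          split_ifs <;> first | rfl | (exfalso; linarith)
        by_cases hv : 1/2 < A
        · have hv' : 1/2 < B := by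
            by_contra hw
            rw [hxbit, hxbit', if_pos hv, if_neg hw] at hbk1
            exact absurd hbk1 (by simp)
          have hbv : tentBit μ x (k+1) = false := by rw [hxbit, if_pos hv]
          refine ⟨fun _ => ?_, fun h => by rw [hbv] at h; exact absurd h (by simp)⟩
          rw [tentMap_of_ge μ A hv.le, tentMap_of_ge μ B hv'.le]
          nlinarith
        · have hv' : ¬ 1/2 < B := by
            intro hw
            rw [hxbit, hxbit', if_neg hv, if_pos hw] at hbk1
            exact absurd hbk1 (by simp)
          have hbv : tentBit μ x (k+1) = true := by rw [hxbit, if_neg hv]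
          refine ⟨fun h => by rw [hbv] at h; exact absurd h (by simp), fun _ => ?_⟩
          rw [tentMap_of_le μ A (le_of_not_gt hv), tentMap_of_le μ B (le_of_not_gt hv')]
          nlinarith
  have h := main (n-1) (by omega)
  have hnn : n - 1 + 1 = n := by omega
  rw [hnn] at h
  exact h
end

section
/- Let μ ∈ (1,2) and n ≥ 1. The set of segment-types 𝒯_n has cardinality at most 2n, i.e. |𝒯_n| ≤ 2n. -/
open Set MeasureTheory

/-! ### auxiliary definitions -/

noncomputable def bitNext (p : Bool) (y : ℝ) : Bool :=
  if y < 1/2 then p else if 1/2 < y then !p else true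

def Sset (p b : Bool) : Set ℝ := {y | bitNext p y = b}

def Dset (p : Bool) (a c : ℝ) : Set ℝ := if p then Ioc a c else Ico a c

noncomputable def mid (μ : ℝ) (i : ℕ) : ℝ := (tentMap μ)^[i] (1/2)

noncomputable def pr (μ : ℝ) : ℕ → ℝ × ℝ
  | 0 => (0, μ / 2)
  | n + 1 =>
    if (pr μ n).2 ≤ 1/2 then (μ * (pr μ n).1, μ * (pr μ n).2)
    else if 1/2 ≤ (pr μ n).1 then (μ * (1 - (pr μ n).2), μ * (1 - (pr μ n).1))
    else if mid μ (n+1) ≤ 1/2 then (μ * (pr μ n).1, μ / 2)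
    else (μ * (1 - (pr μ n).2), μ / 2)

/-! ### basic lemmas -/

lemma tentBit_succ_s8 (μ x : ℝ) (k : ℕ) :
    tentBit μ x (k+1) = bitNext (tentBit μ x k) ((tentMap μ)^[k+1] x) := rfl

lemma tentCode_succ (μ : ℝ) (n : ℕ) (x : ℝ) :
    tentCode μ (n+1) x = tentCode μ n x ++ [tentBit μ x n] := by
  simp [tentCode, List.range_succ]

lemma tentCode_length (μ : ℝ) (n : ℕ) (x : ℝ) : (tentCode μ n x).length = n := by
  simp [tentCode]

lemma Sset_ff : Sset false false = {y : ℝ | y < 1/2} := by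
  ext y; simp only [Sset, bitNext, mem_setOf_eq]
  split_ifs with h1 h2 <;> simp_all

lemma Sset_ft : Sset false true = {y : ℝ | 1/2 ≤ y} := by
  ext y; simp only [Sset, bitNext, mem_setOf_eq]
  split_ifs with h1 h2 <;> simp_all <;> linarith

lemma Sset_tt : Sset true true = {y : ℝ | y ≤ 1/2} := by
  ext y; simp only [Sset, bitNext, mem_setOf_eq]
  split_ifs with h1 h2 <;> simp_all <;> linarith

lemma Sset_tf : Sset true false = {y : ℝ | 1/2 < y} := by
  ext y; simp only [Sset, bitNext, mem_setOf_eq]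
  split_ifs with h1 h2 <;> simp_all <;> linarith

lemma tentMap_left {μ y : ℝ} (h : y ≤ 1/2) : tentMap μ y = μ * y := if_pos h

lemma tentMap_right {μ y : ℝ} (h : 1/2 ≤ y) : tentMap μ y = μ * (1 - y) := by
  unfold tentMap
  split_ifs with h'
  · have : y = 1/2 := le_antisymm h' h
    subst this; norm_num
  · rfl

/-! ### image lemmas -/

lemma image_Ico_left {μ a c : ℝ} (hμ : 0 < μ) (hc : c ≤ 1/2) :
    tentMap μ '' Ico a c = Ico (μ*a) (μ*c) := by
  ext z
  constructor
  · rintro ⟨y, ⟨h1, h2⟩, rfl⟩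
    rw [tentMap_left (by linarith)]
    exact ⟨by nlinarith, by nlinarith⟩
  · rintro ⟨h1, h2⟩
    refine ⟨z/μ, ⟨?_, ?_⟩, ?_⟩
    · rw [le_div_iff₀ hμ]; linarith
    · rw [div_lt_iff₀ hμ]; linarith
    · rw [tentMap_left, mul_div_cancel₀ _ (ne_of_gt hμ)]
      rw [div_le_iff₀ hμ]; nlinarith

lemma image_Ioc_left {μ a c : ℝ} (hμ : 0 < μ) (hc : c ≤ 1/2) :
    tentMap μ '' Ioc a c = Ioc (μ*a) (μ*c) := by
  ext z
  constructor
  · rintro ⟨y, ⟨h1, h2⟩, rfl⟩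
    rw [tentMap_left (by linarith)]
    exact ⟨by nlinarith, by nlinarith⟩
  · rintro ⟨h1, h2⟩
    refine ⟨z/μ, ⟨?_, ?_⟩, ?_⟩
    · rw [lt_div_iff₀ hμ]; linarith
    · rw [div_le_iff₀ hμ]; linarith
    · rw [tentMap_left, mul_div_cancel₀ _ (ne_of_gt hμ)]
      rw [div_le_iff₀ hμ]; nlinarith

lemma image_Ico_right {μ a c : ℝ} (hμ : 0 < μ) (ha : 1/2 ≤ a) :
    tentMap μ '' Ico a c = Ioc (μ*(1-c)) (μ*(1-a)) := by
  ext z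
  constructor
  · rintro ⟨y, ⟨h1, h2⟩, rfl⟩
    rw [tentMap_right (by linarith)]
    exact ⟨by nlinarith, by nlinarith⟩
  · rintro ⟨h1, h2⟩
    refine ⟨1 - z/μ, ⟨?_, ?_⟩, ?_⟩
    · have : z/μ ≤ 1 - a := by rw [div_le_iff₀ hμ]; linarith
      linarith
    · have : 1 - c < z/μ := by rw [lt_div_iff₀ hμ]; linarith
      linarith
    · rw [tentMap_right, ]
      · field_simp; ring
      · have : z/μ ≤ 1 - a := by rw [div_le_iff₀ hμ]; linarith
        linarith

lemma image_Ioc_right {μ a c : ℝ} (hμ : 0 < μ) (ha : 1/2 ≤ a) :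
    tentMap μ '' Ioc a c = Ico (μ*(1-c)) (μ*(1-a)) := by
  ext z
  constructor
  · rintro ⟨y, ⟨h1, h2⟩, rfl⟩
    rw [tentMap_right (by linarith)]
    exact ⟨by nlinarith, by nlinarith⟩
  · rintro ⟨h1, h2⟩
    refine ⟨1 - z/μ, ⟨?_, ?_⟩, ?_⟩
    · have : z/μ < 1 - a := by rw [div_lt_iff₀ hμ]; linarith
      linarith
    · have : 1 - c ≤ z/μ := by rw [le_div_iff₀ hμ]; linarith
      linarith
    · rw [tentMap_right]
      · field_simp; ring
      · have : z/μ < 1 - a := by rw [div_lt_iff₀ hμ]; linarith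
        linarith

/-! ### core image computations -/

lemma inter_lt_half_of_le {a c : ℝ} (hc : c ≤ 1/2) :
    Ico a c ∩ {y : ℝ | y < 1/2} = Ico a c :=
  inter_eq_self_of_subset_left (fun y hy => lt_of_lt_of_le hy.2 hc)

lemma core_left_ff {μ a c : ℝ} (hμ : 0 < μ) (hc : c ≤ 1/2) :
    tentMap μ '' (Ico a c ∩ Sset false false) = Ico (μ*a) (μ*c) := by
  rw [Sset_ff]
  have h2 : Ico a c ∩ {y : ℝ | y < 1/2} = Ico a c :=
    inter_eq_self_of_subset_left (fun y hy => lt_of_lt_of_le hy.2 hc)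
  rw [h2]; exact image_Ico_left hμ hc

lemma core_left_ft {μ a c : ℝ} (hc : c ≤ 1/2) :
    tentMap μ '' (Ico a c ∩ Sset false true) = ∅ := by
  rw [Sset_ft]
  have : Ico a c ∩ {y : ℝ | 1/2 ≤ y} = ∅ := by
    ext y; simp only [mem_inter_iff, mem_Ico, mem_setOf_eq, mem_empty_iff_false, iff_false]
    rintro ⟨⟨_, h2⟩, h3⟩; linarith
  rw [this, image_empty]

lemma core_left_tt {μ a c : ℝ} (hμ : 0 < μ) (hc : c ≤ 1/2) :
    tentMap μ '' (Ioc a c ∩ Sset true true) = Ioc (μ*a) (μ*c) := by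
  rw [Sset_tt]
  have h2 : Ioc a c ∩ {y : ℝ | y ≤ 1/2} = Ioc a c :=
    inter_eq_self_of_subset_left (fun y hy => le_trans hy.2 hc)
  rw [h2]; exact image_Ioc_left hμ hc

lemma core_left_tf {μ a c : ℝ} (hc : c ≤ 1/2) :
    tentMap μ '' (Ioc a c ∩ Sset true false) = ∅ := by
  rw [Sset_tf]
  have : Ioc a c ∩ {y : ℝ | 1/2 < y} = ∅ := by
    ext y; simp only [mem_inter_iff, mem_Ioc, mem_setOf_eq, mem_empty_iff_false, iff_false]
    rintro ⟨⟨_, h2⟩, h3⟩; linarith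
  rw [this, image_empty]

lemma core_right_ff {μ a c : ℝ} (ha : 1/2 ≤ a) :
    tentMap μ '' (Ico a c ∩ Sset false false) = ∅ := by
  rw [Sset_ff]
  have : Ico a c ∩ {y : ℝ | y < 1/2} = ∅ := by
    ext y; simp only [mem_inter_iff, mem_Ico, mem_setOf_eq, mem_empty_iff_false, iff_false]
    rintro ⟨⟨h1, _⟩, h3⟩; linarith
  rw [this, image_empty]

lemma core_right_ft {μ a c : ℝ} (hμ : 0 < μ) (ha : 1/2 ≤ a) :
    tentMap μ '' (Ico a c ∩ Sset false true) = Ioc (μ*(1-c)) (μ*(1-a)) := by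
  rw [Sset_ft]
  have h2 : Ico a c ∩ {y : ℝ | 1/2 ≤ y} = Ico a c :=
    inter_eq_self_of_subset_left (fun y hy => le_trans ha hy.1)
  rw [h2]; exact image_Ico_right hμ ha

lemma core_right_tf {μ a c : ℝ} (hμ : 0 < μ) (ha : 1/2 ≤ a) :
    tentMap μ '' (Ioc a c ∩ Sset true false) = Ico (μ*(1-c)) (μ*(1-a)) := by
  rw [Sset_tf]
  have h2 : Ioc a c ∩ {y : ℝ | 1/2 < y} = Ioc a c :=
    inter_eq_self_of_subset_left (fun y hy => lt_of_le_of_lt ha hy.1)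
  rw [h2]; exact image_Ioc_right hμ ha

lemma core_right_tt {μ a c : ℝ} (ha : 1/2 ≤ a) :
    tentMap μ '' (Ioc a c ∩ Sset true true) = ∅ := by
  rw [Sset_tt]
  have : Ioc a c ∩ {y : ℝ | y ≤ 1/2} = ∅ := by
    ext y; simp only [mem_inter_iff, mem_Ioc, mem_setOf_eq, mem_empty_iff_false, iff_false]
    rintro ⟨⟨h1, _⟩, h3⟩; linarith
  rw [this, image_empty]

lemma core_mid_ff {μ a c : ℝ} (hμ : 0 < μ) (ha : a < 1/2) (hc : 1/2 < c) :
    tentMap μ '' (Ico a c ∩ Sset false false) = Ico (μ*a) (μ/2) := by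
  rw [Sset_ff]
  have h2 : Ico a c ∩ {y : ℝ | y < 1/2} = Ico a (1/2) := by
    ext y; simp only [mem_inter_iff, mem_Ico, mem_setOf_eq]
    constructor
    · rintro ⟨⟨h1, _⟩, h3⟩; exact ⟨h1, h3⟩
    · rintro ⟨h1, h3⟩; exact ⟨⟨h1, lt_trans h3 hc⟩, h3⟩
  rw [h2, image_Ico_left hμ (le_refl _), show μ * (1/2 : ℝ) = μ/2 by ring]

lemma core_mid_ft {μ a c : ℝ} (hμ : 0 < μ) (ha : a < 1/2) (hc : 1/2 < c) :
    tentMap μ '' (Ico a c ∩ Sset false true) = Ioc (μ*(1-c)) (μ/2) := by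
  rw [Sset_ft]
  have h2 : Ico a c ∩ {y : ℝ | 1/2 ≤ y} = Ico (1/2) c := by
    ext y; simp only [mem_inter_iff, mem_Ico, mem_setOf_eq]
    constructor
    · rintro ⟨⟨_, h2⟩, h3⟩; exact ⟨h3, h2⟩
    · rintro ⟨h1, h3⟩; exact ⟨⟨le_trans (le_of_lt ha) h1, h3⟩, h1⟩
  rw [h2, image_Ico_right hμ (le_refl _), show μ * (1 - (1/2 : ℝ)) = μ/2 by ring]

lemma core_mid_tf {μ a c : ℝ} (hμ : 0 < μ) (ha : a < 1/2) (hc : 1/2 < c) :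
    tentMap μ '' (Ioc a c ∩ Sset true false) = Ico (μ*(1-c)) (μ/2) := by
  rw [Sset_tf]
  have h2 : Ioc a c ∩ {y : ℝ | 1/2 < y} = Ioc (1/2) c := by
    ext y; simp only [mem_inter_iff, mem_Ioc, mem_setOf_eq]
    constructor
    · rintro ⟨⟨_, h2⟩, h3⟩; exact ⟨h3, h2⟩
    · rintro ⟨h1, h3⟩; exact ⟨⟨lt_trans ha h1, h3⟩, h1⟩
  rw [h2, image_Ioc_right hμ (le_refl _), show μ * (1 - (1/2 : ℝ)) = μ/2 by ring]

lemma core_mid_tt {μ a c : ℝ} (hμ : 0 < μ) (ha : a < 1/2) (hc : 1/2 < c) :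
    tentMap μ '' (Ioc a c ∩ Sset true true) = Ioc (μ*a) (μ/2) := by
  rw [Sset_tt]
  have h2 : Ioc a c ∩ {y : ℝ | y ≤ 1/2} = Ioc a (1/2) := by
    ext y; simp only [mem_inter_iff, mem_Ioc, mem_setOf_eq]
    constructor
    · rintro ⟨⟨h1, _⟩, h3⟩; exact ⟨h1, h3⟩
    · rintro ⟨h1, h3⟩; exact ⟨⟨h1, le_trans h3 (le_of_lt hc)⟩, h3⟩
  rw [h2, image_Ioc_left hμ (le_refl _), show μ * (1/2 : ℝ) = μ/2 by ring]

/-! ### recursion for segment types -/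

lemma tentCode_eq_append {μ x : ℝ} {n : ℕ} {w : List Bool} {b : Bool}
    (h : tentCode μ (n+1) x = w ++ [b]) (hw : w.length = n) :
    tentCode μ n x = w ∧ tentBit μ x n = b := by
  rw [tentCode_succ] at h
  have hl : (tentCode μ n x).length = w.length := by rw [tentCode_length, hw]
  obtain ⟨h1, h2⟩ := List.append_inj h hl
  exact ⟨h1, by simpa using h2⟩

lemma segType_snoc (μ : ℝ) (k : ℕ) (w : List Bool) (p b : Bool)
    (hw : ∀ x : ℝ, tentCode μ (k+1) x = w → tentBit μ x k = p) (hlen : w.length = k+1) :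
    segType μ (k+2) (w ++ [b]) = tentMap μ '' (segType μ (k+1) w ∩ Sset p b) := by
  ext y
  simp only [segType, mem_setOf_eq, mem_image, mem_inter_iff]
  constructor
  · rintro ⟨x, hx, hcode, rfl⟩
    obtain ⟨h1, h2⟩ := tentCode_eq_append hcode hlen
    refine ⟨(tentMap μ)^[k+1] x, ⟨⟨x, hx, h1, rfl⟩, ?_⟩, ?_⟩
    · show bitNext p ((tentMap μ)^[k+1] x) = b
      rw [← hw x h1, ← tentBit_succ_s8]; exact h2
    · exact (Function.iterate_succ_apply' _ _ _).symm
  · rintro ⟨z, ⟨⟨x, hx, hcode, rfl⟩, hS⟩, rfl⟩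
    refine ⟨x, hx, ?_, Function.iterate_succ_apply' _ _ _⟩
    rw [tentCode_succ, hcode]
    have : tentBit μ x (k+1) = b := by
      rw [tentBit_succ_s8, hw x hcode]; exact hS
    rw [this]

lemma mid_succ (μ : ℝ) (i : ℕ) : mid μ (i+1) = tentMap μ (mid μ i) :=
  Function.iterate_succ_apply' _ _ _

lemma mid_zero (μ : ℝ) : mid μ 0 = 1/2 := rfl

lemma mid_one (μ : ℝ) : mid μ 1 = μ/2 := by
  rw [mid_succ, mid_zero, tentMap_left (le_refl _)]; ring

lemma pr_zero (μ : ℝ) : pr μ 0 = (0, μ/2) := rfl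

lemma pr_succ_left {μ : ℝ} {n : ℕ} (h : (pr μ n).2 ≤ 1/2) :
    pr μ (n+1) = (μ * (pr μ n).1, μ * (pr μ n).2) := by
  rw [pr, if_pos h]

lemma pr_succ_right {μ : ℝ} {n : ℕ} (h1 : ¬ (pr μ n).2 ≤ 1/2) (h2 : 1/2 ≤ (pr μ n).1) :
    pr μ (n+1) = (μ * (1 - (pr μ n).2), μ * (1 - (pr μ n).1)) := by
  rw [pr, if_neg h1, if_pos h2]

lemma pr_succ_mida {μ : ℝ} {n : ℕ} (h1 : ¬ (pr μ n).2 ≤ 1/2) (h2 : ¬ 1/2 ≤ (pr μ n).1)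
    (h3 : mid μ (n+1) ≤ 1/2) :
    pr μ (n+1) = (μ * (pr μ n).1, μ / 2) := by
  rw [pr, if_neg h1, if_neg h2, if_pos h3]

lemma pr_succ_midc {μ : ℝ} {n : ℕ} (h1 : ¬ (pr μ n).2 ≤ 1/2) (h2 : ¬ 1/2 ≤ (pr μ n).1)
    (h3 : ¬ mid μ (n+1) ≤ 1/2) :
    pr μ (n+1) = (μ * (1 - (pr μ n).2), μ / 2) := by
  rw [pr, if_neg h1, if_neg h2, if_neg h3]

/-- The pushing helper: the image of an old orbit endpoint lands on a pair in the family. -/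
lemma push_left {μ : ℝ} (hμ0 : 0 < μ) {t : ℕ} {v x y : ℝ}
    (htm : mid μ (t+1) = (pr μ t).1 ∨ mid μ (t+1) = (pr μ t).2)
    (hv : v = mid μ (t+1)) (hv2 : v ≤ 1/2)
    (hx : μ * (pr μ t).1 ≤ x) (hx0 : 0 ≤ x)
    (hy : y ≤ μ * (pr μ t).2) (hy2 : y ≤ μ/2) :
    ∃ t' ≤ t+1, tentMap μ v = mid μ (t'+1) ∧ (pr μ t').1 ≤ x ∧ y ≤ (pr μ t').2 := by
  by_cases g1 : (pr μ t).2 ≤ 1/2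
  · refine ⟨t+1, le_refl _, ?_, ?_, ?_⟩
    · rw [hv]; exact (mid_succ μ (t+1)).symm
    · rw [pr_succ_left g1]; exact hx
    · rw [pr_succ_left g1]; exact hy
  · by_cases g2 : 1/2 ≤ (pr μ t).1
    · have hv12 : v = 1/2 := by
        rcases htm with h | h
        · rw [hv, h]; exact le_antisymm (by rw [← h, ← hv]; exact hv2) g2
        · exfalso; rw [hv, h] at hv2; exact g1 hv2
      refine ⟨0, Nat.zero_le _, ?_, ?_, ?_⟩
      · rw [hv12, mid_one, tentMap_left (le_refl _)]; ring
      · rw [pr_zero]; exact hx0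
      · rw [pr_zero]; exact hy2
    · have hmle : mid μ (t+1) ≤ 1/2 := hv ▸ hv2
      refine ⟨t+1, le_refl _, ?_, ?_, ?_⟩
      · rw [hv]; exact (mid_succ μ (t+1)).symm
      · rw [pr_succ_mida g1 g2 hmle]; exact hx
      · rw [pr_succ_mida g1 g2 hmle]; exact hy2

lemma push_right {μ : ℝ} (hμ0 : 0 < μ) {t : ℕ} {v x y : ℝ}
    (htac : (pr μ t).1 ≤ (pr μ t).2)
    (htm : mid μ (t+1) = (pr μ t).1 ∨ mid μ (t+1) = (pr μ t).2)
    (hv : v = mid μ (t+1)) (hv2 : 1/2 ≤ v)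
    (hx : μ * (1 - (pr μ t).2) ≤ x) (hx0 : 0 ≤ x)
    (hy : y ≤ μ * (1 - (pr μ t).1)) (hy2 : y ≤ μ/2) :
    ∃ t' ≤ t+1, tentMap μ v = mid μ (t'+1) ∧ (pr μ t').1 ≤ x ∧ y ≤ (pr μ t').2 := by
  by_cases g1 : (pr μ t).2 ≤ 1/2
  · have hv12 : v = 1/2 := by
      rcases htm with h | h
      · rw [hv, h]; exact le_antisymm (le_trans htac g1) (by rw [← h, ← hv]; exact hv2)
      · rw [hv, h]; exact le_antisymm g1 (by rw [← h, ← hv]; exact hv2)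
    refine ⟨0, Nat.zero_le _, ?_, ?_, ?_⟩
    · rw [hv12, mid_one, tentMap_left (le_refl _)]; ring
    · rw [pr_zero]; exact hx0
    · rw [pr_zero]; exact hy2
  · by_cases g2 : 1/2 ≤ (pr μ t).1
    · refine ⟨t+1, le_refl _, ?_, ?_, ?_⟩
      · rw [hv]; exact (mid_succ μ (t+1)).symm
      · rw [pr_succ_right g1 g2]; exact hx
      · rw [pr_succ_right g1 g2]; exact hy
    · -- straddle at t ; v = mid(t+1) ≥ 1/2 so v = (pr μ t).2 > 1/2
      have hvc : v = (pr μ t).2 := by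
        rcases htm with h | h
        · exfalso
          have : (pr μ t).1 < 1/2 := lt_of_not_ge g2
          rw [hv, h] at hv2; linarith
        · rw [hv, h]
      have hvgt : 1/2 < v := by
        rcases lt_or_eq_of_le hv2 with h | h
        · exact h
        · exfalso; rw [hvc] at h; exact g1 (le_of_eq h.symm)
      have hmgt : ¬ mid μ (t+1) ≤ 1/2 := by rw [← hv]; exact not_le.mpr hvgt
      refine ⟨t+1, le_refl _, ?_, ?_, ?_⟩
      · rw [hv]; exact (mid_succ μ (t+1)).symm
      · rw [pr_succ_midc g1 g2 hmgt]; exact hx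
      · rw [pr_succ_midc g1 g2 hmgt]; exact hy2

def StructP (μ : ℝ) (n : ℕ) : Prop :=
  0 ≤ (pr μ n).1 ∧ (pr μ n).1 < (pr μ n).2 ∧ (pr μ n).2 ≤ μ/2 ∧
    (mid μ (n+1) = (pr μ n).1 ∨ mid μ (n+1) = (pr μ n).2) ∧
    ((if mid μ (n+1) = (pr μ n).1 then (pr μ n).2 else (pr μ n).1) = 0 ∨
      ∃ t ≤ n, (if mid μ (n+1) = (pr μ n).1 then (pr μ n).2 else (pr μ n).1) = mid μ (t+1) ∧
        (pr μ t).1 ≤ (pr μ n).1 ∧ (pr μ n).2 ≤ (pr μ t).2)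

set_option maxHeartbeats 1600000 in
lemma struct (μ : ℝ) (hμ1 : 1 < μ) (hμ2 : μ < 2) : ∀ n : ℕ, StructP μ n := by
  have hμ0 : (0:ℝ) < μ := by linarith
  intro n
  induction n using Nat.strong_induction_on with
  | _ n ih =>
    match n with
    | 0 =>
      have hmid1 : mid μ 1 = μ/2 := mid_one μ
      refine ⟨le_refl _, by simpa [pr_zero] using (by linarith : (0:ℝ) < μ/2), le_refl _, ?_, ?_⟩
      · right; rw [pr_zero, hmid1]
      · left
        rw [pr_zero] at *
        have : ¬ (mid μ 1 = (0:ℝ)) := by rw [hmid1]; intro h; linarith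
        simpa [this]
    | Nat.succ k =>
      obtain ⟨h0, hac, hcm, hm, hD⟩ := ih k (Nat.lt_succ_self k)
      set a := (pr μ k).1 with hadef
      set c := (pr μ k).2 with hcdef
      by_cases h1 : c ≤ 1/2
      · -- CASE L : within left half
        have hpr : pr μ (k+1) = (μ * a, μ * c) := pr_succ_left h1
        have hmidle : mid μ (k+1) ≤ 1/2 := by
          rcases hm with h | h <;> rw [h] <;> linarith
        have hmid2 : mid μ (k+2) = μ * mid μ (k+1) := by
          rw [mid_succ, tentMap_left hmidle]
        refine ⟨?_, ?_, ?_, ?_, ?_⟩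
        · rw [hpr]; exact mul_nonneg (le_of_lt hμ0) h0
        · rw [hpr]; exact mul_lt_mul_of_pos_left hac hμ0
        · rw [hpr]; show μ * c ≤ μ/2; nlinarith
        · rcases hm with h | h
          · left; rw [hpr]; show mid μ (k+1+1) = μ * a; rw [hmid2, h]
          · right; rw [hpr]; show mid μ (k+1+1) = μ * c; rw [hmid2, h]
        · rcases hm with hma | hmc
          · -- old o = c
            have hif : mid μ (k+1+1) = (pr μ (k+1)).1 := by
              rw [hpr]; show mid μ (k+2) = μ * a; rw [hmid2, hma]
            rw [if_pos hif, hpr]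
            rw [if_pos hma] at hD
            rcases hD with hc0 | ⟨t, htk, hoc, hta, htc⟩
            · exfalso; linarith
            · obtain ⟨_, _, _, tm, _⟩ := ih t (by omega)
              obtain ⟨t', ht', heq, hc1, hc2⟩ :=
                push_left (x := μ * a) (y := μ * c) hμ0 tm hoc h1
                  (mul_le_mul_of_nonneg_left hta (le_of_lt hμ0))
                  (mul_nonneg (le_of_lt hμ0) h0)
                  (mul_le_mul_of_nonneg_left htc (le_of_lt hμ0))
                  (by nlinarith)
              right
              exact ⟨t', by omega, by rw [← tentMap_left h1]; exact heq, hc1, hc2⟩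
          · -- old o = a
            have hif : ¬ mid μ (k+1+1) = (pr μ (k+1)).1 := by
              rw [hpr]; show ¬ mid μ (k+2) = μ * a
              rw [hmid2, hmc]
              exact ne_of_gt (mul_lt_mul_of_pos_left hac hμ0)
            rw [if_neg hif, hpr]
            have hnc : ¬ mid μ (k+1) = a := by rw [hmc]; exact ne_of_gt hac
            rw [if_neg hnc] at hD
            have hale : a ≤ 1/2 := by linarith
            rcases hD with ha0 | ⟨t, htk, hoa, hta, htc⟩
            · left; show μ * a = 0; rw [ha0, mul_zero]
            · obtain ⟨_, _, _, tm, _⟩ := ih t (by omega)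
              obtain ⟨t', ht', heq, hc1, hc2⟩ :=
                push_left (x := μ * a) (y := μ * c) hμ0 tm hoa hale
                  (mul_le_mul_of_nonneg_left hta (le_of_lt hμ0))
                  (mul_nonneg (le_of_lt hμ0) h0)
                  (mul_le_mul_of_nonneg_left htc (le_of_lt hμ0))
                  (by nlinarith)
              right
              exact ⟨t', by omega, by rw [← tentMap_left hale]; exact heq, hc1, hc2⟩
      · by_cases h2 : 1/2 ≤ a
        · -- CASE R : within right half
          have hcgt : 1/2 < c := lt_of_not_ge h1
          have hclt1 : c < 1 := by linarith
          have hpr : pr μ (k+1) = (μ * (1 - c), μ * (1 - a)) := pr_succ_right h1 h2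
          have hmidge : 1/2 ≤ mid μ (k+1) := by
            rcases hm with h | h <;> rw [h] <;> linarith
          have hmid2 : mid μ (k+2) = μ * (1 - mid μ (k+1)) := by
            rw [mid_succ, tentMap_right hmidge]
          refine ⟨?_, ?_, ?_, ?_, ?_⟩
          · rw [hpr]; show (0:ℝ) ≤ μ * (1 - c); nlinarith
          · rw [hpr]; show μ * (1 - c) < μ * (1 - a)
            exact mul_lt_mul_of_pos_left (by linarith) hμ0
          · rw [hpr]; show μ * (1 - a) ≤ μ/2; nlinarith
          · rcases hm with h | h
            · right; rw [hpr]; show mid μ (k+1+1) = μ * (1 - a); rw [hmid2, h]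
            · left; rw [hpr]; show mid μ (k+1+1) = μ * (1 - c); rw [hmid2, h]
          · rcases hm with hma | hmc
            · -- old o = c ; new o = μ(1-c) = fst
              have hif : ¬ mid μ (k+1+1) = (pr μ (k+1)).1 := by
                rw [hpr]; show ¬ mid μ (k+2) = μ * (1 - c)
                rw [hmid2, hma]
                exact ne_of_gt (mul_lt_mul_of_pos_left (by linarith) hμ0)
              rw [if_neg hif, hpr]
              rw [if_pos hma] at hD
              rcases hD with hc0 | ⟨t, htk, hoc, hta, htc⟩
              · exfalso; linarith
              · obtain ⟨_, tac2, _, tm, _⟩ := ih t (by omega)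
                obtain ⟨t', ht', heq, hc1, hc2⟩ :=
                  push_right (x := μ * (1 - c)) (y := μ * (1 - a)) hμ0 (le_of_lt tac2) tm hoc
                    (by linarith)
                    (mul_le_mul_of_nonneg_left (by linarith) (le_of_lt hμ0))
                    (mul_nonneg (le_of_lt hμ0) (by linarith))
                    (mul_le_mul_of_nonneg_left (by linarith) (le_of_lt hμ0))
                    (by nlinarith)
                right
                exact ⟨t', by omega, by rw [← tentMap_right (by linarith : (1:ℝ)/2 ≤ c)]; exact heq,
                  hc1, hc2⟩
            · -- old o = a ; new o = μ(1-a) = snd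
              have hif : mid μ (k+1+1) = (pr μ (k+1)).1 := by
                rw [hpr]; show mid μ (k+2) = μ * (1 - c); rw [hmid2, hmc]
              rw [if_pos hif, hpr]
              have hnc : ¬ mid μ (k+1) = a := by rw [hmc]; exact ne_of_gt hac
              rw [if_neg hnc] at hD
              rcases hD with ha0 | ⟨t, htk, hoa, hta, htc⟩
              · exfalso; linarith
              · obtain ⟨_, tac2, _, tm, _⟩ := ih t (by omega)
                obtain ⟨t', ht', heq, hc1, hc2⟩ :=
                  push_right (x := μ * (1 - c)) (y := μ * (1 - a)) hμ0 (le_of_lt tac2) tm hoa h2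
                    (mul_le_mul_of_nonneg_left (by linarith) (le_of_lt hμ0))
                    (mul_nonneg (le_of_lt hμ0) (by linarith))
                    (mul_le_mul_of_nonneg_left (by linarith) (le_of_lt hμ0))
                    (by nlinarith)
                right
                exact ⟨t', by omega, by rw [← tentMap_right h2]; exact heq, hc1, hc2⟩
        · -- CASE M : straddle
          have halt : a < 1/2 := lt_of_not_ge h2
          have hcgt : 1/2 < c := lt_of_not_ge h1
          have hclt1 : c < 1 := by linarith
          by_cases hs : mid μ (k+1) ≤ 1/2
          · have hma : mid μ (k+1) = a := by
              rcases hm with h | h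
              · exact h
              · exfalso; rw [h] at hs; linarith
            have hpr : pr μ (k+1) = (μ * a, μ / 2) := pr_succ_mida h1 h2 hs
            have hmid2 : mid μ (k+2) = μ * a := by
              rw [mid_succ, tentMap_left hs, hma]
            refine ⟨?_, ?_, ?_, ?_, ?_⟩
            · rw [hpr]; exact mul_nonneg (le_of_lt hμ0) h0
            · rw [hpr]; show μ * a < μ/2; nlinarith
            · rw [hpr]
            · left; rw [hpr]; show mid μ (k+1+1) = μ * a; exact hmid2
            · have hif : mid μ (k+1+1) = (pr μ (k+1)).1 := by
                rw [hpr]; exact hmid2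
              rw [if_pos hif, hpr]
              right
              refine ⟨0, Nat.zero_le _, ?_, ?_, ?_⟩
              · show (μ:ℝ)/2 = mid μ 1; rw [mid_one]
              · rw [pr_zero]; exact mul_nonneg (le_of_lt hμ0) h0
              · rw [pr_zero]
          · have hmc : mid μ (k+1) = c := by
              rcases hm with h | h
              · exfalso; rw [h] at hs; exact hs (by linarith)
              · exact h
            have hpr : pr μ (k+1) = (μ * (1 - c), μ / 2) := pr_succ_midc h1 h2 hs
            have hmid2 : mid μ (k+2) = μ * (1 - c) := by
              rw [mid_succ, tentMap_right (by rw [hmc]; linarith), hmc]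
            refine ⟨?_, ?_, ?_, ?_, ?_⟩
            · rw [hpr]; show (0:ℝ) ≤ μ * (1 - c); nlinarith
            · rw [hpr]; show μ * (1 - c) < μ/2; nlinarith
            · rw [hpr]
            · left; rw [hpr]; show mid μ (k+1+1) = μ * (1 - c); exact hmid2
            · have hif : mid μ (k+1+1) = (pr μ (k+1)).1 := by
                rw [hpr]; exact hmid2
              rw [if_pos hif, hpr]
              right
              refine ⟨0, Nat.zero_le _, ?_, ?_, ?_⟩
              · show (μ:ℝ)/2 = mid μ 1; rw [mid_one]
              · rw [pr_zero]; show (0:ℝ) ≤ μ * (1 - c); nlinarith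
              · rw [pr_zero]

lemma Dset_false (a c : ℝ) : Dset false a c = Ico a c := rfl
lemma Dset_true (a c : ℝ) : Dset true a c = Ioc a c := rfl

lemma tentCode_one (μ x : ℝ) : tentCode μ 1 x = [tentBit μ x 0] := by
  rw [show (1:ℕ) = 0 + 1 from rfl, tentCode_succ]
  simp [tentCode]

lemma segType_one (μ : ℝ) (b : Bool) :
    segType μ 1 [b] = tentMap μ '' {x | x ∈ Ico (0:ℝ) 1 ∧ tentBit μ x 0 = b} := by
  ext y
  simp only [segType, mem_setOf_eq, mem_image]
  constructor
  · rintro ⟨x, hx, hc, hy⟩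
    have hb : tentBit μ x 0 = b := by
      rw [tentCode_one] at hc; simpa using hc
    refine ⟨x, ⟨hx, hb⟩, ?_⟩
    rw [Function.iterate_one] at hy; exact hy
  · rintro ⟨x, ⟨hx, hb⟩, hy⟩
    refine ⟨x, hx, ?_, ?_⟩
    · rw [tentCode_one, hb]
    · rw [Function.iterate_one]; exact hy

lemma bit0_false (μ : ℝ) :
    {x | x ∈ Ico (0:ℝ) 1 ∧ tentBit μ x 0 = false} = Ico (0:ℝ) (1/2) := by
  ext x
  simp only [mem_setOf_eq, mem_Ico]
  constructor
  · rintro ⟨⟨h0, h1⟩, hb⟩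
    by_cases h : (1:ℝ)/2 ≤ x
    · exfalso; simp [tentBit, h] at hb; linarith
    · exact ⟨h0, lt_of_not_ge h⟩
  · rintro ⟨h0, h2⟩
    refine ⟨⟨h0, by linarith⟩, ?_⟩
    simp [tentBit]; linarith

lemma bit0_true (μ : ℝ) :
    {x | x ∈ Ico (0:ℝ) 1 ∧ tentBit μ x 0 = true} = Ico (1/2 : ℝ) 1 := by
  ext x
  simp only [mem_setOf_eq, mem_Ico]
  constructor
  · rintro ⟨⟨h0, h1⟩, hb⟩
    by_cases h : (1:ℝ)/2 ≤ x
    · exact ⟨h, h1⟩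
    · exfalso; simp [tentBit, h] at hb; linarith
  · rintro ⟨h0, h2⟩
    refine ⟨⟨by linarith, h2⟩, ?_⟩
    simp [tentBit]; linarith

set_option maxHeartbeats 1600000 in
lemma inv_lemma (μ : ℝ) (hμ1 : 1 < μ) (hμ2 : μ < 2) :
    ∀ n : ℕ, 1 ≤ n → ∀ w ∈ tentLang μ n,
      ∃ j < n, ∃ p : Bool,
        (∀ x : ℝ, tentCode μ n x = w → tentBit μ x (n-1) = p) ∧
        segType μ n w = Dset p (pr μ j).1 (pr μ j).2 := by
  have hμ0 : (0:ℝ) < μ := by linarith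
  intro n
  induction n with
  | zero => intro h; exact absurd h (by omega)
  | succ k ihk =>
    intro _ w hw
    rcases Nat.eq_zero_or_pos k with rfl | hk
    · -- base case n = 1
      obtain ⟨x, hx, hcode⟩ := hw
      refine ⟨0, by omega, tentBit μ x 0, ?_, ?_⟩
      · intro x' hx'
        rw [← hcode, tentCode_one] at hx'
        rw [tentCode_one] at hx'
        simpa using hx'
      · rw [← hcode, tentCode_one]
        cases hb : tentBit μ x 0
        · rw [segType_one, bit0_false, image_Ico_left hμ0 (le_refl _), pr_zero, Dset_false]
          rw [show μ * (0:ℝ) = 0 by ring, show μ * ((1:ℝ)/2) = μ/2 by ring]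
        · rw [segType_one, bit0_true, image_Ico_right hμ0 (le_refl _), pr_zero, Dset_true]
          rw [show μ * (1-(1:ℝ)) = 0 by ring, show μ * (1-(1:ℝ)/2) = μ/2 by ring]
    · -- inductive step
      obtain ⟨k', rfl⟩ : ∃ k', k = k' + 1 := ⟨k-1, by omega⟩
      obtain ⟨x, hx, hcode⟩ := hw
      have hw' : tentCode μ (k'+1) x ∈ tentLang μ (k'+1) := ⟨x, hx, rfl⟩
      obtain ⟨j, hj, p, hp, hT⟩ := ihk (by omega) (tentCode μ (k'+1) x) hw'
      obtain ⟨b, hbdef⟩ : ∃ b, tentBit μ x (k'+1) = b := ⟨_, rfl⟩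
      have hweq : w = tentCode μ (k'+1) x ++ [b] := by
        rw [← hcode, tentCode_succ, hbdef]
      have hp' : ∀ x' : ℝ, tentCode μ (k'+1) x' = tentCode μ (k'+1) x →
          tentBit μ x' k' = p := by
        intro x' h
        exact hp x' h
      have hTw : segType μ (k'+2) w
          = tentMap μ '' (Dset p (pr μ j).1 (pr μ j).2 ∩ Sset p b) := by
        rw [hweq, segType_snoc μ k' _ p b hp' (tentCode_length μ (k'+1) x), hT]
      have hy0 : (tentMap μ)^[k'+2] x ∈ segType μ (k'+2) w := ⟨x, hx, hcode, rfl⟩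
      obtain ⟨j0, jac, jcm, jm, jD⟩ := struct μ hμ1 hμ2 j
      have hwnext : ∀ x' : ℝ, tentCode μ (k'+2) x' = w → tentBit μ x' (k'+1) = b := by
        intro x' h
        rw [hweq] at h
        exact (tentCode_eq_append h (tentCode_length μ (k'+1) x)).2
      by_cases h1 : (pr μ j).2 ≤ 1/2
      · cases p <;> cases b
        · refine ⟨j+1, by omega, false, hwnext, ?_⟩
          rw [hTw, Dset_false, core_left_ff hμ0 h1, pr_succ_left h1, Dset_false]
        · exfalso
          have he : segType μ (k'+2) w = ∅ := by
            rw [hTw, Dset_false, core_left_ft h1]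
          rw [he] at hy0; exact notMem_empty _ hy0
        · exfalso
          have he : segType μ (k'+2) w = ∅ := by
            rw [hTw, Dset_true, core_left_tf h1]
          rw [he] at hy0; exact notMem_empty _ hy0
        · refine ⟨j+1, by omega, true, hwnext, ?_⟩
          rw [hTw, Dset_true, core_left_tt hμ0 h1, pr_succ_left h1, Dset_true]
      · by_cases h2 : 1/2 ≤ (pr μ j).1
        · cases p <;> cases b
          · exfalso
            have he : segType μ (k'+2) w = ∅ := by
              rw [hTw, Dset_false, core_right_ff h2]
            rw [he] at hy0; exact notMem_empty _ hy0
          · refine ⟨j+1, by omega, true, hwnext, ?_⟩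
            rw [hTw, Dset_false, core_right_ft hμ0 h2, pr_succ_right h1 h2, Dset_true]
          · refine ⟨j+1, by omega, false, hwnext, ?_⟩
            rw [hTw, Dset_true, core_right_tf hμ0 h2, pr_succ_right h1 h2, Dset_false]
          · exfalso
            have he : segType μ (k'+2) w = ∅ := by
              rw [hTw, Dset_true, core_right_tt h2]
            rw [he] at hy0; exact notMem_empty _ hy0
        · -- straddle case
          have haj : (pr μ j).1 < 1/2 := lt_of_not_ge h2
          have hcj : 1/2 < (pr μ j).2 := lt_of_not_ge h1
          have hA : ∃ s, s < k'+2 ∧ pr μ s = (μ * (pr μ j).1, μ/2) := by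
            rcases jm with jma | jmc
            · exact ⟨j+1, by omega, pr_succ_mida h1 h2 (by rw [jma]; linarith)⟩
            · have hnc : ¬ mid μ (j+1) = (pr μ j).1 := by
                rw [jmc]; exact ne_of_gt jac
              rw [if_neg hnc] at jD
              rcases jD with ha0 | ⟨t, htj, hoa, hta, htc⟩
              · exact ⟨0, by omega, by rw [pr_zero, ha0, mul_zero]⟩
              · obtain ⟨t0', tac', tcm', tm', _⟩ := struct μ hμ1 hμ2 t
                have g1t : ¬ (pr μ t).2 ≤ 1/2 := by intro hcon; linarith
                have g2t : ¬ 1/2 ≤ (pr μ t).1 := by intro hcon; linarith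
                have hmt : mid μ (t+1) = (pr μ t).1 := by
                  rcases tm' with h | h
                  · exact h
                  · exfalso; rw [h] at hoa; linarith
                have hat : (pr μ t).1 = (pr μ j).1 := (hoa.trans hmt).symm
                have hmle : mid μ (t+1) ≤ 1/2 := by rw [hmt, hat]; linarith
                exact ⟨t+1, by omega, by rw [pr_succ_mida g1t g2t hmle, hat]⟩
          have hC : ∃ s, s < k'+2 ∧ pr μ s = (μ * (1 - (pr μ j).2), μ/2) := by
            rcases jm with jma | jmc
            · rw [if_pos jma] at jD
              rcases jD with hc0 | ⟨t, htj, hoc, hta, htc⟩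
              · exfalso; linarith
              · obtain ⟨t0', tac', tcm', tm', _⟩ := struct μ hμ1 hμ2 t
                have g1t : ¬ (pr μ t).2 ≤ 1/2 := by intro hcon; linarith
                have g2t : ¬ 1/2 ≤ (pr μ t).1 := by intro hcon; linarith
                have hmt : mid μ (t+1) = (pr μ t).2 := by
                  rcases tm' with h | h
                  · exfalso; rw [h] at hoc; linarith
                  · exact h
                have hct : (pr μ t).2 = (pr μ j).2 := (hoc.trans hmt).symm
                have hmgt : ¬ mid μ (t+1) ≤ 1/2 := by
                  rw [hmt, hct]; exact not_le.mpr hcj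
                exact ⟨t+1, by omega, by rw [pr_succ_midc g1t g2t hmgt, hct]⟩
            · exact ⟨j+1, by omega,
                pr_succ_midc h1 h2 (by rw [jmc]; exact not_le.mpr hcj)⟩
          cases p <;> cases b
          · obtain ⟨s, hs, hps⟩ := hA
            refine ⟨s, hs, false, hwnext, ?_⟩
            rw [hTw, Dset_false, core_mid_ff hμ0 haj hcj, hps, Dset_false]
          · obtain ⟨s, hs, hps⟩ := hC
            refine ⟨s, hs, true, hwnext, ?_⟩
            rw [hTw, Dset_false, core_mid_ft hμ0 haj hcj, hps, Dset_true]
          · obtain ⟨s, hs, hps⟩ := hC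
            refine ⟨s, hs, false, hwnext, ?_⟩
            rw [hTw, Dset_true, core_mid_tf hμ0 haj hcj, hps, Dset_false]
          · obtain ⟨s, hs, hps⟩ := hA
            refine ⟨s, hs, true, hwnext, ?_⟩
            rw [hTw, Dset_true, core_mid_tt hμ0 haj hcj, hps, Dset_true]


/-- `|𝒯_n| ≤ 2n`. -/
theorem typeSet_card_le (μ : ℝ) (hμ1 : 1 < μ) (hμ2 : μ < 2) (n : ℕ) (hn : 1 ≤ n) :
    (typeSet μ n).Finite ∧ (typeSet μ n).ncard ≤ 2 * n := by
  classical
  set F : Finset (Set ℝ) := (Finset.range n).biUnion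
    (fun j => {Dset false (pr μ j).1 (pr μ j).2, Dset true (pr μ j).1 (pr μ j).2}) with hF
  have hsub : typeSet μ n ⊆ ↑F := by
    rintro S ⟨w, hw, rfl⟩
    obtain ⟨j, hj, p, _, hT⟩ := inv_lemma μ hμ1 hμ2 n hn w hw
    rw [hT]
    simp only [hF, Finset.coe_biUnion, Finset.mem_coe, Finset.mem_range, mem_iUnion]
    refine ⟨j, hj, ?_⟩
    cases p
    · exact Finset.mem_insert_self _ _
    · exact Finset.mem_insert_of_mem (Finset.mem_singleton_self _)
  have hcard : F.card ≤ 2 * n := by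
    refine le_trans (Finset.card_biUnion_le) ?_
    have : ∀ j ∈ Finset.range n,
        ({Dset false (pr μ j).1 (pr μ j).2, Dset true (pr μ j).1 (pr μ j).2} :
          Finset (Set ℝ)).card ≤ 2 := by
      intro j _
      exact le_trans (Finset.card_insert_le _ _) (by simp)
    refine le_trans (Finset.sum_le_sum this) ?_
    simp [Finset.sum_const, Finset.card_range, mul_comm]
  constructor
  · exact F.finite_toSet.subset hsub
  · exact le_trans (le_trans (Set.ncard_le_ncard hsub F.finite_toSet)
      (le_of_eq (Set.ncard_coe_finset F))) hcard
end
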